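/- arXiv:1503.05662 — 2 statements merged into one kernel-verified Lean document; each statement's English description precedes it below -/
import Mathlib

section
/- For the generalized XXZ Hamiltonian H, the conjugation by the twist operators satisfies the exact operator identity (U^tw_{±2π})† H U^tw_{±2π} − H = Σ_{j=1}^{L} Σ_{r=1}^{L/2} (J(r)/2) ( S^+_j S^-_{j+r} (e^{∓2πir/L} − 1) + S^-_j S^+_{j+r} (e^{±2πir/L} − 1) ); in particular the longitudinal couplings Δ(r) and the field h drop out. -/
open scoped BigOperators Matrix
open Fin.NatCast
noncomputable section

namespace LSM

/-- Number of basis states per site: `2S+1`. -/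
abbrev N (twoS : ℕ) : ℕ := twoS + 1

/-- The spin value `S` as a real number (so `2S = twoS`). -/
def spin (twoS : ℕ) : ℝ := (twoS : ℝ) / 2

/-- The `S^z`-value of the `k`-th basis vector: `m = S - k`, `k = 0, …, 2S`. -/
def mval (twoS : ℕ) (k : Fin (N twoS)) : ℝ := spin twoS - (k : ℕ)

/-- Single-site `S^z` matrix. -/
def SzMat (twoS : ℕ) : Matrix (Fin (N twoS)) (Fin (N twoS)) ℂ :=
  Matrix.diagonal fun k => (mval twoS k : ℂ)

/-- Single-site raising operator `S^+`. -/
def SpMat (twoS : ℕ) : Matrix (Fin (N twoS)) (Fin (N twoS)) ℂ :=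
  Matrix.of fun a b =>
    if (a : ℕ) + 1 = (b : ℕ) then
      ((Real.sqrt (spin twoS * (spin twoS + 1) - mval twoS b * (mval twoS b + 1)) : ℝ) : ℂ)
    else 0

/-- Single-site lowering operator `S^-`. -/
def SmMat (twoS : ℕ) : Matrix (Fin (N twoS)) (Fin (N twoS)) ℂ :=
  Matrix.of fun a b =>
    if (a : ℕ) = (b : ℕ) + 1 then
      ((Real.sqrt (spin twoS * (spin twoS + 1) - mval twoS b * (mval twoS b - 1)) : ℝ) : ℂ)
    else 0

/-- Single-site `S^y = (S^+ - S^-)/(2i)`. -/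
def SyMat (twoS : ℕ) : Matrix (Fin (N twoS)) (Fin (N twoS)) ℂ :=
  ((2 : ℂ) * Complex.I)⁻¹ • (SpMat twoS - SmMat twoS)

/-- Single-site `S^x = (S^+ + S^-)/2`. -/
def SxMat (twoS : ℕ) : Matrix (Fin (N twoS)) (Fin (N twoS)) ℂ :=
  ((2 : ℂ))⁻¹ • (SpMat twoS + SmMat twoS)

/-- Configurations (product basis labels) of the chain of length `L`. -/
abbrev Conf (twoS L : ℕ) := Fin L → Fin (N twoS)

/-- Operators on the chain Hilbert space `⊗_{j=1}^L ℂ^{2S+1}`, as matrices in the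
product basis. -/
abbrev Op (twoS L : ℕ) := Matrix (Conf twoS L) (Conf twoS L) ℂ

/-- The single-site matrix `A` acting on the `j`-th tensor factor (identity elsewhere). -/
def site (twoS L : ℕ) (j : Fin L) (A : Matrix (Fin (N twoS)) (Fin (N twoS)) ℂ) :
    Op twoS L :=
  Matrix.of fun x y => if ∀ i, i ≠ j → x i = y i then A (x j) (y j) else 0

/-- Total `S^z`. -/
def SzT (twoS L : ℕ) : Op twoS L := ∑ j : Fin L, site twoS L j (SzMat twoS)

/-- Total `S^y`. -/
def SyT (twoS L : ℕ) : Op twoS L := ∑ j : Fin L, site twoS L j (SyMat twoS)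

/-- Translation by one site: the permutation matrix with
`Utrl† A_j Utrl = A_{j+1}` for every single-site operator `A`. -/
def Utrl (twoS L : ℕ) [NeZero L] : Op twoS L :=
  Matrix.of fun x y => if x = (fun i => y (i + 1)) then 1 else 0

/-- Site parity (space inversion `j ↦ L - j = -j (mod L)`): the permutation matrix with
`P† A_j P = A_{L-j}` for every single-site operator `A`. -/
def Pop (twoS L : ℕ) [NeZero L] : Op twoS L :=
  Matrix.of fun x y => if x = (fun i => y (-i)) then 1 else 0

/-- Link parity `P_link = P U_trl`. -/
def Plink (twoS L : ℕ) [NeZero L] : Op twoS L := Pop twoS L * Utrl twoS L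

/-- The generalized XXZ Hamiltonian with periodic boundary conditions. -/
def Ham (twoS L : ℕ) [NeZero L] (J Δ : ℕ → ℝ) (h : ℝ) : Op twoS L :=
  (∑ j : Fin L, ∑ r ∈ Finset.Icc 1 (L / 2),
      ((((J r : ℝ) : ℂ) / 2) •
        (site twoS L j (SpMat twoS) * site twoS L (j + (r : Fin L)) (SmMat twoS) +
          site twoS L j (SmMat twoS) * site twoS L (j + (r : Fin L)) (SpMat twoS)) +
      ((Δ r : ℝ) : ℂ) •
        (site twoS L j (SzMat twoS) * site twoS L (j + (r : Fin L)) (SzMat twoS)))) +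
    (h : ℂ) • SzT twoS L

/-- The generator `Σ_{j=1}^{L} j (S^z_j - S)` of the (site-centered) twist. -/
def twistGen (twoS L : ℕ) [NeZero L] : Op twoS L :=
  ∑ j ∈ Finset.Icc 1 L,
    (j : ℂ) • site twoS L ((j : ℕ) : Fin L) (SzMat twoS - ((spin twoS : ℝ) : ℂ) • 1)

/-- The twist operator `U^tw_{ε·2π} = exp(-ε (2πi/L) Σ_j j (S^z_j - S))`, `ε = ±1`. -/
def Utw (twoS L : ℕ) [NeZero L] (ε : ℝ) : Op twoS L :=
  NormedSpace.exp ((-(ε : ℂ) * ((2 * Real.pi / L : ℝ) : ℂ) * Complex.I) • twistGen twoS L)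

/-- The generator `Σ_{j=1}^{L} (j - 1/2)(S^z_j - S)` of the link-centered twist. -/
def twistGenL (twoS L : ℕ) [NeZero L] : Op twoS L :=
  ∑ j ∈ Finset.Icc 1 L,
    ((j : ℂ) - 1 / 2) • site twoS L ((j : ℕ) : Fin L) (SzMat twoS - ((spin twoS : ℝ) : ℂ) • 1)

/-- The link-centered twist operator `U^twl_{ε·2π}`, `ε = ±1`. -/
def UtwL (twoS L : ℕ) [NeZero L] (ε : ℝ) : Op twoS L :=
  NormedSpace.exp ((-(ε : ℂ) * ((2 * Real.pi / L : ℝ) : ℂ) * Complex.I) • twistGenL twoS L)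

/-- The spin-reversal operator `U^y_π = exp(-iπ S^y_T)`. -/
def Uy (twoS L : ℕ) : Op twoS L :=
  NormedSpace.exp ((-Complex.I * ((Real.pi : ℝ) : ℂ)) • SyT twoS L)

/-- The sector `V(M, q)` of simultaneous eigenvectors of `S^z_T` (eigenvalue `M`) and of
the translation `U_trl` (eigenvalue `e^{iq}`). -/
def Vsp (twoS L : ℕ) [NeZero L] (M q : ℝ) : Submodule ℂ (Conf twoS L → ℂ) :=
  Module.End.eigenspace (Matrix.mulVecLin (SzT twoS L)) ((M : ℝ) : ℂ) ⊓
    Module.End.eigenspace (Matrix.mulVecLin (Utrl twoS L)) (Complex.exp (Complex.I * q))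

/-- `E(M; q)`: the smallest eigenvalue of `H` restricted to the sector `V(M,q)`. -/
def En (twoS L : ℕ) [NeZero L] (J Δ : ℕ → ℝ) (h : ℝ) (M q : ℝ) : ℝ :=
  sInf {E : ℝ | ∃ ψ ∈ Vsp twoS L M q, ψ ≠ 0 ∧
    (Ham twoS L J Δ h).mulVec ψ = ((E : ℝ) : ℂ) • ψ}

/-- The expectation value `⟨ψ, A ψ⟩`. -/
def expVal (twoS L : ℕ) (A : Op twoS L) (ψ : Conf twoS L → ℂ) : ℂ :=
  dotProduct (star ψ) (A.mulVec ψ)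

/-- `q` belongs to the lattice `(2π/L)ℤ` of allowed wavenumbers. -/
def allowedQ (L : ℕ) (q : ℝ) : Prop := ∃ k : ℤ, q = 2 * Real.pi * k / L


set_option linter.unusedSectionVars false
section TwistAux

variable (twoS L : ℕ) [NeZero L]

lemma site_diagonal (j : Fin L) (v : Fin (N twoS) → ℂ) :
    site twoS L j (Matrix.diagonal v) = Matrix.diagonal (fun x => v (x j)) := by
  ext x y
  by_cases hxy : x = y
  · subst hxy
    simp [site, Matrix.diagonal_apply_eq]
  · rw [Matrix.diagonal_apply_ne _ hxy]
    simp only [site, Matrix.of_apply]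
    split_ifs with hcond
    · have hxj : x j ≠ y j := by
        intro hj
        exact hxy (funext fun i => by
          by_cases hij : i = j
          · rw [hij]; exact hj
          · exact hcond i hij)
      exact Matrix.diagonal_apply_ne _ hxj
    · rfl

lemma sz_sub :
    SzMat twoS - ((spin twoS : ℝ) : ℂ) • 1 =
      Matrix.diagonal (fun k => ((mval twoS k - spin twoS : ℝ) : ℂ)) := by
  ext a b
  by_cases h : a = b
  · subst h
    simp [SzMat, Matrix.one_apply_eq, Matrix.sub_apply, Matrix.smul_apply]
  · simp [SzMat, Matrix.diagonal_apply_ne _ h, Matrix.one_apply_ne h,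
      Matrix.sub_apply, Matrix.smul_apply]

def Dfun (x : Conf twoS L) : ℝ :=
  ∑ j' ∈ Finset.Icc 1 L, (j' : ℝ) * (mval twoS (x ((j' : ℕ) : Fin L)) - spin twoS)

lemma twistGen_eq :
    twistGen twoS L = Matrix.diagonal (fun x => ((Dfun twoS L x : ℝ) : ℂ)) := by
  unfold twistGen
  rw [sz_sub]
  ext x y
  rw [Matrix.sum_apply]
  by_cases hxy : x = y
  · subst hxy
    rw [Matrix.diagonal_apply_eq]
    unfold Dfun
    push_cast
    refine Finset.sum_congr rfl fun n _ => ?_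
    rw [site_diagonal]
    simp [Matrix.diagonal_apply_eq]
  · rw [Matrix.diagonal_apply_ne _ hxy]
    refine Finset.sum_eq_zero fun n _ => ?_
    rw [site_diagonal]
    simp [Matrix.diagonal_apply_ne _ hxy]

def wtN (p : Fin L) : ℕ := if (p : ℕ) = 0 then L else (p : ℕ)

lemma wtN_mem (p : Fin L) : wtN L p ∈ Finset.Icc 1 L := by
  have hL : 0 < L := Nat.pos_of_ne_zero (NeZero.ne L)
  have hp := p.isLt
  rw [Finset.mem_Icc]; unfold wtN; split_ifs with h <;> omega

lemma cast_wtN (p : Fin L) : ((wtN L p : ℕ) : Fin L) = p := by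
  unfold wtN
  split_ifs with h
  · have hp : p = 0 := Fin.ext (by simpa using h)
    rw [hp, Fin.natCast_self]
  · exact Fin.cast_val_eq_self p

lemma wtN_unique {n : ℕ} (hn : n ∈ Finset.Icc 1 L) {p : Fin L}
    (h : ((n : ℕ) : Fin L) = p) : n = wtN L p := by
  rw [Finset.mem_Icc] at hn
  have hval : (p : ℕ) = n % L := by rw [← h, Fin.val_natCast]
  unfold wtN
  rcases eq_or_lt_of_le hn.2 with hL | hL
  · have h0 : (p : ℕ) = 0 := by rw [hval, hL, Nat.mod_self]
    rw [if_pos h0]; omega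
  · rw [Nat.mod_eq_of_lt hL] at hval
    have hne : (p : ℕ) ≠ 0 := by omega
    rw [if_neg hne]; omega

lemma exists_shift (j : Fin L) (r : ℕ) :
    ∃ t : ℤ, ((wtN L (j + (r : Fin L)) : ℤ) - (wtN L j : ℤ) - (r : ℤ)) = (L : ℤ) * t := by
  have hz : ∀ p : Fin L, ((wtN L p : ℕ) : ZMod L) = ((p : ℕ) : ZMod L) := by
    intro p; unfold wtN; split_ifs with h
    · rw [h]; simp
    · rfl
  have key : (L : ℤ) ∣ ((wtN L (j + (r : Fin L)) : ℤ) - (wtN L j : ℤ) - (r : ℤ)) := by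
    rw [← ZMod.intCast_zmod_eq_zero_iff_dvd]
    push_cast
    rw [hz, hz]
    have h1 : (((j + (r : Fin L)) : Fin L) : ℕ) = ((j : ℕ) + ((r : Fin L) : ℕ)) % L :=
      Fin.val_add _ _
    rw [h1, ZMod.natCast_mod]
    push_cast
    rw [Fin.val_natCast, ZMod.natCast_mod]
    ring
  exact key

lemma Dfun_sub (j k : Fin L) (hjk : j ≠ k) (x y : Conf twoS L)
    (hoff : ∀ i, i ≠ j → i ≠ k → x i = y i) :
    Dfun twoS L y - Dfun twoS L x =
      (wtN L j : ℝ) * (((x j : ℕ) : ℝ) - ((y j : ℕ) : ℝ)) +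
      (wtN L k : ℝ) * (((x k : ℕ) : ℝ) - ((y k : ℕ) : ℝ)) := by
  unfold Dfun
  rw [← Finset.sum_sub_distrib]
  rw [Finset.sum_congr rfl (fun (n : ℕ) _ => show
      (n : ℝ) * (mval twoS (y ((n : ℕ) : Fin L)) - spin twoS) -
        (n : ℝ) * (mval twoS (x ((n : ℕ) : Fin L)) - spin twoS) =
      (n : ℝ) * (((x ((n : ℕ) : Fin L) : ℕ) : ℝ) - ((y ((n : ℕ) : Fin L) : ℕ) : ℝ)) by
    unfold mval; ring)]
  have hsub : ({wtN L j, wtN L k} : Finset ℕ) ⊆ Finset.Icc 1 L := by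
    intro n hn
    rcases Finset.mem_insert.mp hn with h | h
    · rw [h]; exact wtN_mem L j
    · rw [Finset.mem_singleton.mp h]; exact wtN_mem L k
  rw [← Finset.sum_subset hsub (fun n hn hnot => ?_)]
  · have hne : wtN L j ≠ wtN L k := fun hEq => hjk (by rw [← cast_wtN L j, ← cast_wtN L k, hEq])
    rw [Finset.sum_pair hne, cast_wtN, cast_wtN]
  · have h1 : ((n : ℕ) : Fin L) ≠ j := fun h =>
      hnot (by rw [wtN_unique L hn h]; exact Finset.mem_insert_self _ _)
    have h2 : ((n : ℕ) : Fin L) ≠ k := fun h =>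
      hnot (by rw [wtN_unique L hn h]; exact Finset.mem_insert_of_mem (Finset.mem_singleton_self _))
    rw [hoff _ h1 h2]; ring

lemma hop_support1 (j k : Fin L) (hjk : j ≠ k) (x y : Conf twoS L)
    (hne : (site twoS L j (SpMat twoS) * site twoS L k (SmMat twoS)) x y ≠ 0) :
    ((x j : ℕ) + 1 = (y j : ℕ)) ∧ ((x k : ℕ) = (y k : ℕ) + 1) ∧
      ∀ i, i ≠ j → i ≠ k → x i = y i := by
  rw [Matrix.mul_apply] at hne
  obtain ⟨z, -, hz⟩ := Finset.exists_ne_zero_of_sum_ne_zero hne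
  have h1 : site twoS L j (SpMat twoS) x z ≠ 0 := left_ne_zero_of_mul hz
  have h2 : site twoS L k (SmMat twoS) z y ≠ 0 := right_ne_zero_of_mul hz
  have hc1 : ∀ i, i ≠ j → x i = z i := by
    by_contra hcon
    simp only [site, Matrix.of_apply, if_neg hcon] at h1
    exact h1 rfl
  have hc2 : ∀ i, i ≠ k → z i = y i := by
    by_contra hcon
    simp only [site, Matrix.of_apply, if_neg hcon] at h2
    exact h2 rfl
  have hvj : (x j : ℕ) + 1 = (z j : ℕ) := by
    by_contra hcon
    have h0 : SpMat twoS (x j) (z j) = 0 := by simp [SpMat, if_neg hcon]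
    simp only [site, Matrix.of_apply] at h1
    split_ifs at h1 with hcond
    exact h1 h0
  have hvk : (z k : ℕ) = (y k : ℕ) + 1 := by
    by_contra hcon
    have h0 : SmMat twoS (z k) (y k) = 0 := by simp [SmMat, if_neg hcon]
    simp only [site, Matrix.of_apply] at h2
    split_ifs at h2 with hcond
    exact h2 h0
  refine ⟨?_, ?_, fun i hij hik => (hc1 i hij).trans (hc2 i hik)⟩
  · rw [← hc2 j hjk]; exact hvj
  · rw [hc1 k (Ne.symm hjk)]; exact hvk

lemma hop_support2 (j k : Fin L) (hjk : j ≠ k) (x y : Conf twoS L)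
    (hne : (site twoS L j (SmMat twoS) * site twoS L k (SpMat twoS)) x y ≠ 0) :
    ((x j : ℕ) = (y j : ℕ) + 1) ∧ ((x k : ℕ) + 1 = (y k : ℕ)) ∧
      ∀ i, i ≠ j → i ≠ k → x i = y i := by
  rw [Matrix.mul_apply] at hne
  obtain ⟨z, -, hz⟩ := Finset.exists_ne_zero_of_sum_ne_zero hne
  have h1 : site twoS L j (SmMat twoS) x z ≠ 0 := left_ne_zero_of_mul hz
  have h2 : site twoS L k (SpMat twoS) z y ≠ 0 := right_ne_zero_of_mul hz
  have hc1 : ∀ i, i ≠ j → x i = z i := by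
    by_contra hcon
    simp only [site, Matrix.of_apply, if_neg hcon] at h1
    exact h1 rfl
  have hc2 : ∀ i, i ≠ k → z i = y i := by
    by_contra hcon
    simp only [site, Matrix.of_apply, if_neg hcon] at h2
    exact h2 rfl
  have hvj : (x j : ℕ) = (z j : ℕ) + 1 := by
    by_contra hcon
    have h0 : SmMat twoS (x j) (z j) = 0 := by simp [SmMat, if_neg hcon]
    simp only [site, Matrix.of_apply] at h1
    split_ifs at h1 with hcond
    exact h1 h0
  have hvk : (z k : ℕ) + 1 = (y k : ℕ) := by
    by_contra hcon
    have h0 : SpMat twoS (z k) (y k) = 0 := by simp [SpMat, if_neg hcon]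
    simp only [site, Matrix.of_apply] at h2
    split_ifs at h2 with hcond
    exact h2 h0
  refine ⟨?_, ?_, fun i hij hik => (hc1 i hij).trans (hc2 i hik)⟩
  · rw [← hc2 j hjk]; exact hvj
  · rw [hc1 k (Ne.symm hjk)]; exact hvk

lemma Utw_eq (ε : ℝ) :
    Utw twoS L ε = Matrix.diagonal (fun x =>
      Complex.exp ((-(ε : ℂ) * ((2 * Real.pi / L : ℝ) : ℂ) * Complex.I) * ((Dfun twoS L x : ℝ) : ℂ))) := by
  unfold Utw
  rw [twistGen_eq, ← Matrix.diagonal_smul, Matrix.exp_diagonal]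
  refine congrArg Matrix.diagonal (funext fun x => ?_)
  rw [Pi.coe_exp, Pi.smul_apply, smul_eq_mul, Complex.exp_eq_exp_ℂ]

lemma UtwH_eq (ε : ℝ) :
    (Utw twoS L ε)ᴴ = Matrix.diagonal (fun x =>
      Complex.exp (-((-(ε : ℂ) * ((2 * Real.pi / L : ℝ) : ℂ) * Complex.I) * ((Dfun twoS L x : ℝ) : ℂ)))) := by
  rw [Utw_eq, Matrix.diagonal_conjTranspose]
  refine congrArg Matrix.diagonal (funext fun x => ?_)
  rw [Pi.star_apply, Complex.star_def, ← Complex.exp_conj]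
  congr 1
  simp only [map_mul, map_neg, Complex.conj_ofReal, Complex.conj_I]
  ring

lemma conj_diag (c : ℂ) (v : Conf twoS L → ℂ) :
    Matrix.diagonal (fun x => Complex.exp (-(c * ((Dfun twoS L x : ℝ) : ℂ)))) * Matrix.diagonal v *
      Matrix.diagonal (fun x => Complex.exp (c * ((Dfun twoS L x : ℝ) : ℂ))) = Matrix.diagonal v := by
  rw [Matrix.diagonal_mul_diagonal, Matrix.diagonal_mul_diagonal]
  refine congrArg Matrix.diagonal (funext fun x => ?_)
  show Complex.exp (-(c * ((Dfun twoS L x : ℝ) : ℂ))) * v x * Complex.exp (c * ((Dfun twoS L x : ℝ) : ℂ)) = v x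
  rw [mul_right_comm, ← Complex.exp_add, neg_add_cancel, Complex.exp_zero, one_mul]

lemma conj_zz (c : ℂ) (j k : Fin L) :
    Matrix.diagonal (fun x => Complex.exp (-(c * ((Dfun twoS L x : ℝ) : ℂ)))) *
        (site twoS L j (SzMat twoS) * site twoS L k (SzMat twoS)) *
      Matrix.diagonal (fun x => Complex.exp (c * ((Dfun twoS L x : ℝ) : ℂ))) =
      site twoS L j (SzMat twoS) * site twoS L k (SzMat twoS) := by
  rw [SzMat, site_diagonal, site_diagonal, Matrix.diagonal_mul_diagonal, conj_diag]

lemma SzT_eq : SzT twoS L = Matrix.diagonal (fun x => ∑ j : Fin L, ((mval twoS (x j) : ℝ) : ℂ)) := by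
  unfold SzT SzMat
  simp_rw [site_diagonal]
  ext x y
  rw [Matrix.sum_apply]
  by_cases hxy : x = y
  · subst hxy
    simp [Matrix.diagonal_apply_eq]
  · rw [Matrix.diagonal_apply_ne _ hxy]
    exact Finset.sum_eq_zero fun n _ => Matrix.diagonal_apply_ne _ hxy

lemma conj_szt (c : ℂ) :
    Matrix.diagonal (fun x => Complex.exp (-(c * ((Dfun twoS L x : ℝ) : ℂ)))) * SzT twoS L *
      Matrix.diagonal (fun x => Complex.exp (c * ((Dfun twoS L x : ℝ) : ℂ))) = SzT twoS L := by
  rw [SzT_eq, conj_diag]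

lemma conj_hop1 (c : ℂ) (hcL : Complex.exp (c * (L : ℂ)) = 1) (j : Fin L) (r : ℕ)
    (hr1 : 1 ≤ r) (hrL : r < L) :
    Matrix.diagonal (fun x => Complex.exp (-(c * ((Dfun twoS L x : ℝ) : ℂ)))) *
        (site twoS L j (SpMat twoS) * site twoS L (j + (r : Fin L)) (SmMat twoS)) *
      Matrix.diagonal (fun x => Complex.exp (c * ((Dfun twoS L x : ℝ) : ℂ))) =
      Complex.exp (c * (r : ℂ)) •
        (site twoS L j (SpMat twoS) * site twoS L (j + (r : Fin L)) (SmMat twoS)) := by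
  have hjk : j ≠ j + (r : Fin L) := by
    intro hEq
    have h0 : (r : Fin L) = 0 := left_eq_add.mp hEq
    have h1 : r % L = 0 := by
      have := congrArg Fin.val h0
      simpa [Fin.val_natCast] using this
    rw [Nat.mod_eq_of_lt hrL] at h1
    omega
  ext x y
  rw [Matrix.mul_diagonal, Matrix.diagonal_mul, Matrix.smul_apply, smul_eq_mul]
  by_cases h0 : (site twoS L j (SpMat twoS) * site twoS L (j + (r : Fin L)) (SmMat twoS)) x y = 0
  · rw [h0]; ring
  · obtain ⟨hvj, hvk, hoff⟩ := hop_support1 twoS L j _ hjk x y h0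
    obtain ⟨t, ht⟩ := exists_shift L j r
    have hD : Dfun twoS L y - Dfun twoS L x = (r : ℝ) + (L : ℝ) * (t : ℝ) := by
      rw [Dfun_sub twoS L j _ hjk x y hoff]
      have e1 : ((x j : ℕ) : ℝ) - ((y j : ℕ) : ℝ) = -1 := by
        rw [← hvj]; push_cast; ring
      have e2 : ((x (j + (r : Fin L)) : ℕ) : ℝ) - ((y (j + (r : Fin L)) : ℕ) : ℝ) = 1 := by
        rw [hvk]; push_cast; ring
      rw [e1, e2]
      have hcast := congrArg (fun z : ℤ => (z : ℝ)) ht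
      push_cast at hcast
      linarith
    have hDC : ((Dfun twoS L y : ℝ) : ℂ) - ((Dfun twoS L x : ℝ) : ℂ) = (r : ℂ) + (L : ℂ) * (t : ℂ) := by
      have := congrArg (fun z : ℝ => (z : ℂ)) hD
      push_cast at this ⊢
      exact this
    have hphase : Complex.exp (-(c * ((Dfun twoS L x : ℝ) : ℂ))) *
        Complex.exp (c * ((Dfun twoS L y : ℝ) : ℂ)) = Complex.exp (c * (r : ℂ)) := by
      rw [← Complex.exp_add]
      have harg : -(c * ((Dfun twoS L x : ℝ) : ℂ)) + c * ((Dfun twoS L y : ℝ) : ℂ) =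
          c * (r : ℂ) + (t : ℂ) * (c * (L : ℂ)) := by
        linear_combination c * hDC
      rw [harg, Complex.exp_add, Complex.exp_int_mul, hcL, one_zpow, mul_one]
    calc Complex.exp (-(c * ((Dfun twoS L x : ℝ) : ℂ))) *
          (site twoS L j (SpMat twoS) * site twoS L (j + (r : Fin L)) (SmMat twoS)) x y *
          Complex.exp (c * ((Dfun twoS L y : ℝ) : ℂ))
        = (Complex.exp (-(c * ((Dfun twoS L x : ℝ) : ℂ))) *
            Complex.exp (c * ((Dfun twoS L y : ℝ) : ℂ))) *
          (site twoS L j (SpMat twoS) * site twoS L (j + (r : Fin L)) (SmMat twoS)) x y := by ring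
      _ = Complex.exp (c * (r : ℂ)) *
          (site twoS L j (SpMat twoS) * site twoS L (j + (r : Fin L)) (SmMat twoS)) x y := by
          rw [hphase]

lemma conj_hop2 (c : ℂ) (hcL : Complex.exp (c * (L : ℂ)) = 1) (j : Fin L) (r : ℕ)
    (hr1 : 1 ≤ r) (hrL : r < L) :
    Matrix.diagonal (fun x => Complex.exp (-(c * ((Dfun twoS L x : ℝ) : ℂ)))) *
        (site twoS L j (SmMat twoS) * site twoS L (j + (r : Fin L)) (SpMat twoS)) *
      Matrix.diagonal (fun x => Complex.exp (c * ((Dfun twoS L x : ℝ) : ℂ))) =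
      Complex.exp (-(c * (r : ℂ))) •
        (site twoS L j (SmMat twoS) * site twoS L (j + (r : Fin L)) (SpMat twoS)) := by
  have hjk : j ≠ j + (r : Fin L) := by
    intro hEq
    have h0 : (r : Fin L) = 0 := left_eq_add.mp hEq
    have h1 : r % L = 0 := by
      have := congrArg Fin.val h0
      simpa [Fin.val_natCast] using this
    rw [Nat.mod_eq_of_lt hrL] at h1
    omega
  ext x y
  rw [Matrix.mul_diagonal, Matrix.diagonal_mul, Matrix.smul_apply, smul_eq_mul]
  by_cases h0 : (site twoS L j (SmMat twoS) * site twoS L (j + (r : Fin L)) (SpMat twoS)) x y = 0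
  · rw [h0]; ring
  · obtain ⟨hvj, hvk, hoff⟩ := hop_support2 twoS L j _ hjk x y h0
    obtain ⟨t, ht⟩ := exists_shift L j r
    have hD : Dfun twoS L y - Dfun twoS L x = -((r : ℝ) + (L : ℝ) * (t : ℝ)) := by
      rw [Dfun_sub twoS L j _ hjk x y hoff]
      have e1 : ((x j : ℕ) : ℝ) - ((y j : ℕ) : ℝ) = 1 := by
        rw [hvj]; push_cast; ring
      have e2 : ((x (j + (r : Fin L)) : ℕ) : ℝ) - ((y (j + (r : Fin L)) : ℕ) : ℝ) = -1 := by
        rw [← hvk]; push_cast; ring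
      rw [e1, e2]
      have hcast := congrArg (fun z : ℤ => (z : ℝ)) ht
      push_cast at hcast
      linarith
    have hDC : ((Dfun twoS L y : ℝ) : ℂ) - ((Dfun twoS L x : ℝ) : ℂ) =
        -((r : ℂ) + (L : ℂ) * (t : ℂ)) := by
      have := congrArg (fun z : ℝ => (z : ℂ)) hD
      push_cast at this ⊢
      exact this
    have hphase : Complex.exp (-(c * ((Dfun twoS L x : ℝ) : ℂ))) *
        Complex.exp (c * ((Dfun twoS L y : ℝ) : ℂ)) = Complex.exp (-(c * (r : ℂ))) := by
      rw [← Complex.exp_add]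
      have harg : -(c * ((Dfun twoS L x : ℝ) : ℂ)) + c * ((Dfun twoS L y : ℝ) : ℂ) =
          -(c * (r : ℂ)) + ((-t : ℤ) : ℂ) * (c * (L : ℂ)) := by
        push_cast
        linear_combination c * hDC
      rw [harg, Complex.exp_add, Complex.exp_int_mul, hcL, one_zpow, mul_one]
    calc Complex.exp (-(c * ((Dfun twoS L x : ℝ) : ℂ))) *
          (site twoS L j (SmMat twoS) * site twoS L (j + (r : Fin L)) (SpMat twoS)) x y *
          Complex.exp (c * ((Dfun twoS L y : ℝ) : ℂ))
        = (Complex.exp (-(c * ((Dfun twoS L x : ℝ) : ℂ))) *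
            Complex.exp (c * ((Dfun twoS L y : ℝ) : ℂ))) *
          (site twoS L j (SmMat twoS) * site twoS L (j + (r : Fin L)) (SpMat twoS)) x y := by ring
      _ = Complex.exp (-(c * (r : ℂ))) *
          (site twoS L j (SmMat twoS) * site twoS L (j + (r : Fin L)) (SpMat twoS)) x y := by
          rw [hphase]

end TwistAux

/-- the exact operator identity for the twisted Hamiltonian:
`(U^tw_{±2π})† H U^tw_{±2π} - H` is the purely transverse sum, independent of
`Δ(·)` and `h`. -/
theorem twisted_hamiltonian_identity (twoS L : ℕ) [NeZero L]
    (hS : 0 < twoS) (hL4 : 4 ≤ L) (hLeven : Even L) (J Δ : ℕ → ℝ) (h : ℝ) :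
    ∀ ε : ℝ, (ε = 1 ∨ ε = -1) →
      (Utw twoS L ε)ᴴ * Ham twoS L J Δ h * Utw twoS L ε - Ham twoS L J Δ h =
      ∑ j : Fin L, ∑ r ∈ Finset.Icc 1 (L / 2),
        ((((J r : ℝ) : ℂ) / 2) •
          ((Complex.exp (-(ε : ℂ) * (2 * Real.pi) * Complex.I * (r : ℂ) / (L : ℂ)) - 1) •
              (site twoS L j (SpMat twoS) * site twoS L (j + (r : Fin L)) (SmMat twoS)) +
            (Complex.exp ((ε : ℂ) * (2 * Real.pi) * Complex.I * (r : ℂ) / (L : ℂ)) - 1) •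
              (site twoS L j (SmMat twoS) * site twoS L (j + (r : Fin L)) (SpMat twoS)))) := by
  intro ε hε
  have hL0 : (L : ℂ) ≠ 0 := Nat.cast_ne_zero.mpr (NeZero.ne L)
  set c : ℂ := -(ε : ℂ) * ((2 * Real.pi / L : ℝ) : ℂ) * Complex.I with hc
  have hcL : Complex.exp (c * (L : ℂ)) = 1 := by
    rcases hε with hε1 | hε1
    · have harg : c * (L : ℂ) = ((-1 : ℤ) : ℂ) * (2 * (Real.pi : ℂ) * Complex.I) := by
        rw [hc, hε1]
        push_cast
        field_simp
      rw [harg, Complex.exp_int_mul_two_pi_mul_I]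
    · have harg : c * (L : ℂ) = ((1 : ℤ) : ℂ) * (2 * (Real.pi : ℂ) * Complex.I) := by
        rw [hc, hε1]
        push_cast
        field_simp
      rw [harg, Complex.exp_int_mul_two_pi_mul_I]
  have hU := Utw_eq twoS L ε
  have hUH := UtwH_eq twoS L ε
  rw [← hc] at hU hUH
  rw [hUH, hU]
  have main :
      Matrix.diagonal (fun x => Complex.exp (-(c * ((Dfun twoS L x : ℝ) : ℂ)))) *
          Ham twoS L J Δ h *
        Matrix.diagonal (fun x => Complex.exp (c * ((Dfun twoS L x : ℝ) : ℂ))) =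
      (∑ j : Fin L, ∑ r ∈ Finset.Icc 1 (L / 2),
        ((((J r : ℝ) : ℂ) / 2) •
          (Complex.exp (c * (r : ℂ)) •
              (site twoS L j (SpMat twoS) * site twoS L (j + (r : Fin L)) (SmMat twoS)) +
            Complex.exp (-(c * (r : ℂ))) •
              (site twoS L j (SmMat twoS) * site twoS L (j + (r : Fin L)) (SpMat twoS))) +
          ((Δ r : ℝ) : ℂ) •
            (site twoS L j (SzMat twoS) * site twoS L (j + (r : Fin L)) (SzMat twoS)))) +
        (h : ℂ) • SzT twoS L := by
    unfold Ham
    simp only [Matrix.mul_add, Matrix.add_mul, Matrix.mul_sum, Matrix.sum_mul,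
      Matrix.mul_smul, Matrix.smul_mul]
    congr 1
    · refine Finset.sum_congr rfl fun j _ => Finset.sum_congr rfl fun r hr => ?_
      rw [Finset.mem_Icc] at hr
      have hr1 : 1 ≤ r := hr.1
      have hrL : r < L :=
        lt_of_le_of_lt hr.2 (Nat.div_lt_self (Nat.pos_of_ne_zero (NeZero.ne L)) one_lt_two)
      rw [conj_hop1 twoS L c hcL j r hr1 hrL, conj_hop2 twoS L c hcL j r hr1 hrL,
        conj_zz twoS L c j (j + (r : Fin L))]
    · rw [conj_szt twoS L c]
  rw [main]
  unfold Ham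
  rw [add_sub_add_right_eq_sub, ← Finset.sum_sub_distrib]
  refine Finset.sum_congr rfl fun j _ => ?_
  rw [← Finset.sum_sub_distrib]
  refine Finset.sum_congr rfl fun r hr => ?_
  have he1 : Complex.exp (-(ε : ℂ) * (2 * Real.pi) * Complex.I * (r : ℂ) / (L : ℂ)) =
      Complex.exp (c * (r : ℂ)) := by
    congr 1
    rw [hc]
    push_cast
    field_simp
  have he2 : Complex.exp ((ε : ℂ) * (2 * Real.pi) * Complex.I * (r : ℂ) / (L : ℂ)) =
      Complex.exp (-(c * (r : ℂ))) := by
    congr 1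
    rw [hc]
    push_cast
    field_simp
  rw [he1, he2]
  module


end LSM
end
end

section
/- (Lemma 5) The spin-reversal operator and the link-centered twist operators satisfy U^y_π U^twl_{±2π} = U^twl_{∓2π} U^y_π (with no extra sign, in contrast to the site-centered twist). -/
open scoped BigOperators Matrix
open Fin.NatCast
noncomputable section

open NormedSpace in
theorem exp_intertwine' {𝔸 : Type*} [NormedRing 𝔸] [NormedAlgebra ℂ 𝔸] [CompleteSpace 𝔸]
    {a b c : 𝔸} (h : a * c = c * b) : exp a * c = c * exp b := by
  have hpow : ∀ n : ℕ, a ^ n * c = c * b ^ n := by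
    intro n
    induction n with
    | zero => simp
    | succ n ih =>
      have h1 : a ^ (n + 1) * c = a * (a ^ n * c) := by rw [pow_succ', mul_assoc]
      rw [h1, ih, ← mul_assoc, h, mul_assoc, ← pow_succ']
  have hs : Summable fun n : ℕ => ((n.factorial : ℂ))⁻¹ • a ^ n := expSeries_summable' a
  have hs' : Summable fun n : ℕ => ((n.factorial : ℂ))⁻¹ • b ^ n := expSeries_summable' b
  simp only [exp_eq_tsum (𝕂 := ℂ)]
  rw [← hs.tsum_mul_right c, ← hs'.tsum_mul_left c]
  congr 1
  funext n
  rw [smul_mul_assoc, hpow n, mul_smul_comm]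

theorem Matrix.exp_intertwine {m : Type*} [Fintype m] [DecidableEq m]
    {a b c : Matrix m m ℂ} (h : a * c = c * b) :
    NormedSpace.exp a * c = c * NormedSpace.exp b := by
  letI : SeminormedRing (Matrix m m ℂ) := Matrix.linftyOpSemiNormedRing
  letI : NormedRing (Matrix m m ℂ) := Matrix.linftyOpNormedRing
  letI : NormedAlgebra ℂ (Matrix m m ℂ) := Matrix.linftyOpNormedAlgebra
  exact exp_intertwine' h

theorem Matrix.exp_smul_one' {m : Type*} [Fintype m] [DecidableEq m] (c : ℂ) :
    NormedSpace.exp (c • (1 : Matrix m m ℂ)) = Complex.exp c • (1 : Matrix m m ℂ) := by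
  rw [Matrix.smul_one_eq_diagonal, Matrix.exp_diagonal, Matrix.smul_one_eq_diagonal]
  congr 1
  funext i
  rw [Pi.exp_def]
  simp [← Complex.exp_eq_exp_ℂ]



namespace LSM

lemma fin_sum_ite {n : ℕ} (t : ℕ) (g : Fin n → ℂ) :
    (∑ c : Fin n, if (c : ℕ) = t then g c else 0) = if h : t < n then g ⟨t, h⟩ else 0 := by
  split_ifs with h
  · rw [Finset.sum_eq_single (⟨t, h⟩ : Fin n)]
    · simp
    · intro c _ hc
      exact if_neg fun hh => hc (Fin.ext hh)
    · simp
  · exact Finset.sum_eq_zero fun c _ => if_neg fun hh => h (hh.symm.trans_lt c.isLt)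

lemma mval_le (twoS : ℕ) (a : Fin (N twoS)) : (a : ℕ) ≤ twoS := Nat.lt_succ_iff.mp a.isLt

lemma SpSz (twoS : ℕ) : SpMat twoS * SzMat twoS = SzMat twoS * SpMat twoS - SpMat twoS := by
  ext a b
  rw [Matrix.sub_apply, SzMat, Matrix.mul_diagonal, Matrix.diagonal_mul]
  simp only [SpMat, Matrix.of_apply]
  split_ifs with h
  · have hm : mval twoS a = mval twoS b + 1 := by
      simp only [mval]
      have : (b : ℕ) = (a : ℕ) + 1 := h.symm
      rw [this]
      push_cast
      ring
    rw [hm]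
    push_cast
    ring
  · ring

lemma SmSz (twoS : ℕ) : SmMat twoS * SzMat twoS = SzMat twoS * SmMat twoS + SmMat twoS := by
  ext a b
  rw [Matrix.add_apply, SzMat, Matrix.mul_diagonal, Matrix.diagonal_mul]
  simp only [SmMat, Matrix.of_apply]
  split_ifs with h
  · have hm : mval twoS a = mval twoS b - 1 := by
      simp only [mval]
      rw [h]
      push_cast
      ring
    rw [hm]
    push_cast
    ring
  · ring

lemma sqrtX (twoS : ℕ) (a c : Fin (N twoS)) (hc : (c : ℕ) = (a : ℕ) + 1) :
    Real.sqrt (spin twoS * (spin twoS + 1) - mval twoS c * (mval twoS c + 1)) *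
      Real.sqrt (spin twoS * (spin twoS + 1) - mval twoS a * (mval twoS a - 1)) =
    spin twoS * (spin twoS + 1) - mval twoS a * (mval twoS a - 1) := by
  have hmc : mval twoS c = mval twoS a - 1 := by
    simp only [mval]
    rw [hc]
    push_cast
    ring
  have ha : ((a : ℕ) : ℝ) ≤ (twoS : ℝ) := by exact_mod_cast mval_le twoS a
  have hnn : 0 ≤ spin twoS * (spin twoS + 1) - mval twoS a * (mval twoS a - 1) := by
    simp only [mval, spin]
    nlinarith [Nat.cast_nonneg (α := ℝ) (a : ℕ)]
  rw [hmc, show spin twoS * (spin twoS + 1) - (mval twoS a - 1) * (mval twoS a - 1 + 1) =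
    spin twoS * (spin twoS + 1) - mval twoS a * (mval twoS a - 1) from by ring,
    Real.mul_self_sqrt hnn]

lemma sqrtY (twoS : ℕ) (a c : Fin (N twoS)) (hc : (c : ℕ) + 1 = (a : ℕ)) :
    Real.sqrt (spin twoS * (spin twoS + 1) - mval twoS c * (mval twoS c - 1)) *
      Real.sqrt (spin twoS * (spin twoS + 1) - mval twoS a * (mval twoS a + 1)) =
    spin twoS * (spin twoS + 1) - mval twoS a * (mval twoS a + 1) := by
  have hmc : mval twoS c = mval twoS a + 1 := by
    simp only [mval]
    rw [← hc]
    push_cast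
    ring
  have ha : ((a : ℕ) : ℝ) ≤ (twoS : ℝ) := by exact_mod_cast mval_le twoS a
  have hnn : 0 ≤ spin twoS * (spin twoS + 1) - mval twoS a * (mval twoS a + 1) := by
    simp only [mval, spin]
    nlinarith [Nat.cast_nonneg (α := ℝ) (a : ℕ)]
  rw [hmc, show spin twoS * (spin twoS + 1) - (mval twoS a + 1) * (mval twoS a + 1 - 1) =
    spin twoS * (spin twoS + 1) - mval twoS a * (mval twoS a + 1) from by ring,
    Real.mul_self_sqrt hnn]

lemma SpSm (twoS : ℕ) : SpMat twoS * SmMat twoS = SmMat twoS * SpMat twoS + (2:ℂ) • SzMat twoS := by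
  ext a b
  rw [Matrix.add_apply, Matrix.smul_apply, Matrix.mul_apply, Matrix.mul_apply]
  simp only [SpMat, SmMat, SzMat, Matrix.of_apply, Matrix.diagonal_apply,
    ite_zero_mul_ite_zero, smul_eq_mul]
  by_cases hab : a = b
  · subst hab
    simp only [if_pos rfl]
    have e1 : ∀ x : Fin (N twoS), ((a:ℕ) + 1 = (x:ℕ) ∧ (x:ℕ) = (a:ℕ) + 1) = ((x:ℕ) = (a:ℕ) + 1) :=
      fun x => propext (by omega)
    simp only [e1]
    rw [fin_sum_ite]
    by_cases ha0 : (a:ℕ) = 0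
    · rw [Finset.sum_eq_zero (fun c _ => if_neg (by omega))]
      split_ifs with h
      · rw [← Complex.ofReal_mul, sqrtX twoS a ⟨(a:ℕ)+1, h⟩ rfl]
        have haR : ((a:ℕ) : ℝ) = 0 := by exact_mod_cast ha0
        norm_cast
        simp only [mval, spin, haR]
        ring
      · have htw : twoS = 0 := by have h2 := a.isLt; simp only [N] at h h2; omega
        subst htw
        have haR : ((a:ℕ) : ℝ) = 0 := by exact_mod_cast ha0
        norm_cast
        simp only [mval, spin, haR]
        norm_num
    · have e2 : ∀ x : Fin (N twoS), ((a:ℕ) = (x:ℕ) + 1 ∧ (x:ℕ) + 1 = (a:ℕ)) = ((x:ℕ) = (a:ℕ) - 1) :=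
        fun x => propext (by omega)
      simp only [e2]
      rw [fin_sum_ite, dif_pos (by omega : (a:ℕ) - 1 < N twoS)]
      split_ifs with h
      · rw [← Complex.ofReal_mul, ← Complex.ofReal_mul,
          sqrtX twoS a ⟨(a:ℕ)+1, h⟩ rfl, sqrtY twoS a ⟨(a:ℕ)-1, Nat.lt_of_le_of_lt (Nat.sub_le _ _) a.isLt⟩ (by simp only [Fin.val_mk]; omega)]
        norm_cast
        ring
      · rw [← Complex.ofReal_mul, sqrtY twoS a ⟨(a:ℕ)-1, Nat.lt_of_le_of_lt (Nat.sub_le _ _) a.isLt⟩ (by simp only [Fin.val_mk]; omega)]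
        have haT : ((a:ℕ) : ℝ) = (twoS : ℝ) := by exact_mod_cast (by have h2 := a.isLt; simp only [N] at h h2; omega : (a:ℕ) = twoS)
        norm_cast
        simp only [mval, spin, haT]
        ring
  · rw [if_neg hab, Finset.sum_eq_zero, Finset.sum_eq_zero]
    · ring
    · intro c _
      exact if_neg (by omega)
    · intro c _
      exact if_neg (by omega)




section SiteLemmas

variable {twoS L : ℕ}

lemma site_one (j : Fin L) :
    site twoS L j (1 : Matrix (Fin (N twoS)) (Fin (N twoS)) ℂ) = 1 := by
  ext x y
  simp only [site, Matrix.of_apply, Matrix.one_apply]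
  by_cases hxy : x = y
  · subst hxy; simp
  · rw [if_neg hxy]
    split_ifs with h1 h2
    · exact absurd (funext fun i => by
        by_cases hi : i = j
        · rw [hi]; exact h2
        · exact h1 i hi) hxy
    · rfl
    · rfl

lemma site_smul (j : Fin L) (c : ℂ) (A : Matrix (Fin (N twoS)) (Fin (N twoS)) ℂ) :
    site twoS L j (c • A) = c • site twoS L j A := by
  ext x y
  simp only [site, Matrix.of_apply, Matrix.smul_apply, smul_eq_mul]
  split_ifs
  · rfl
  · rw [mul_zero]

lemma site_sub (j : Fin L) (A B : Matrix (Fin (N twoS)) (Fin (N twoS)) ℂ) :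
    site twoS L j (A - B) = site twoS L j A - site twoS L j B := by
  ext x y
  simp only [site, Matrix.of_apply, Matrix.sub_apply]
  split_ifs
  · rfl
  · rw [sub_zero]

lemma site_mul_same (j : Fin L) (A B : Matrix (Fin (N twoS)) (Fin (N twoS)) ℂ) :
    site twoS L j A * site twoS L j B = site twoS L j (A * B) := by
  ext x y
  rw [Matrix.mul_apply]
  simp only [site, Matrix.of_apply]
  rw [← Finset.sum_subset
      (Finset.subset_univ (Finset.image (fun k => Function.update x j k) Finset.univ))]
  · rw [Finset.sum_image (fun a _ b _ hab => by simpa using congrFun hab j)]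
    have h1 : ∀ k : Fin (N twoS), (∀ i, i ≠ j → x i = Function.update x j k i) := by
      intro k i hi
      rw [Function.update_of_ne hi]
    have h2 : ∀ k : Fin (N twoS),
        (∀ i, i ≠ j → Function.update x j k i = y i) ↔ (∀ i, i ≠ j → x i = y i) := by
      intro k
      constructor
      · intro hh i hi
        rw [← hh i hi, Function.update_of_ne hi]
      · intro hh i hi
        rw [Function.update_of_ne hi]
        exact hh i hi
    simp only [if_pos (h1 _), Function.update_self]
    by_cases hc : ∀ i, i ≠ j → x i = y i
    · rw [if_pos hc, Matrix.mul_apply]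
      refine Finset.sum_congr rfl fun k _ => ?_
      rw [if_pos ((h2 k).mpr hc)]
    · rw [if_neg hc]
      refine Finset.sum_eq_zero fun k _ => ?_
      rw [if_neg fun hh => hc ((h2 k).mp hh), mul_zero]
  · intro z _ hz
    rw [if_neg, zero_mul]
    intro hagree
    exact hz (Finset.mem_image.mpr ⟨z j, Finset.mem_univ _, funext fun i => by
      by_cases hi : i = j
      · subst hi; rw [Function.update_self]
      · rw [Function.update_of_ne hi]; exact (hagree i hi)⟩)

lemma site_mul_site_ne {j k : Fin L} (h : j ≠ k) (A B : Matrix (Fin (N twoS)) (Fin (N twoS)) ℂ) :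
    site twoS L j A * site twoS L k B =
      Matrix.of fun x y =>
        if ∀ i, i ≠ j → i ≠ k → x i = y i then A (x j) (y j) * B (x k) (y k) else 0 := by
  ext x y
  rw [Matrix.mul_apply]
  simp only [site, Matrix.of_apply]
  rw [Finset.sum_eq_single (Function.update x j (y j))]
  · have hfirst : ∀ i, i ≠ j → x i = Function.update x j (y j) i := fun i hi =>
      (Function.update_of_ne hi _ _).symm
    rw [if_pos hfirst, Function.update_self]
    have hk : Function.update x j (y j) k = x k := Function.update_of_ne (Ne.symm h) _ _
    have hiff : (∀ i, i ≠ k → Function.update x j (y j) i = y i) ↔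
        (∀ i, i ≠ j → i ≠ k → x i = y i) := by
      constructor
      · intro hh i hij hik
        rw [← hh i hik, Function.update_of_ne hij]
      · intro hh i hik
        by_cases hij : i = j
        · subst hij; rw [Function.update_self]
        · rw [Function.update_of_ne hij]; exact hh i hij hik
    by_cases hc : ∀ i, i ≠ j → i ≠ k → x i = y i
    · rw [if_pos (hiff.mpr hc), if_pos hc, hk]
    · rw [if_neg (fun hh => hc (hiff.mp hh)), if_neg hc, mul_zero]
  · intro z _ hz
    by_cases h1 : ∀ i, i ≠ j → x i = z i
    · rw [if_pos h1]
      by_cases h2 : ∀ i, i ≠ k → z i = y i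
      · exact absurd (show z = Function.update x j (y j) from funext fun i => by
          by_cases hi : i = j
          · subst hi; rw [Function.update_self]; exact h2 i h
          · rw [Function.update_of_ne hi]; exact (h1 i hi).symm) hz
      · rw [if_neg h2, mul_zero]
    · rw [if_neg h1, zero_mul]
  · intro hz
    exact absurd (Finset.mem_univ _) hz

lemma site_comm {j k : Fin L} (h : j ≠ k) (A B : Matrix (Fin (N twoS)) (Fin (N twoS)) ℂ) :
    site twoS L j A * site twoS L k B = site twoS L k B * site twoS L j A := by
  rw [site_mul_site_ne h, site_mul_site_ne (Ne.symm h)]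
  ext x y
  simp only [Matrix.of_apply]
  have hiff : (∀ i, i ≠ j → i ≠ k → x i = y i) ↔ (∀ i, i ≠ k → i ≠ j → x i = y i) :=
    ⟨fun H i h1 h2 => H i h2 h1, fun H i h1 h2 => H i h2 h1⟩
  rw [if_congr hiff (mul_comm _ _) rfl]

end SiteLemmas



lemma SySzComm (twoS : ℕ) :
    SyMat twoS * SzMat twoS - SzMat twoS * SyMat twoS = Complex.I • SxMat twoS := by
  simp only [SyMat, SxMat, smul_mul_assoc, mul_smul_comm, sub_mul, mul_sub, add_mul, mul_add,
    SpSz, SmSz, smul_add, smul_sub, smul_smul]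
  match_scalars <;> (ring_nf; try simp [Complex.I_sq]; try ring)

lemma SySxComm (twoS : ℕ) :
    SyMat twoS * SxMat twoS - SxMat twoS * SyMat twoS = (-Complex.I) • SzMat twoS := by
  simp only [SyMat, SxMat, smul_mul_assoc, mul_smul_comm, sub_mul, mul_sub, add_mul, mul_add,
    SpSm, smul_add, smul_sub, smul_smul]
  match_scalars <;> (ring_nf; try simp [Complex.I_sq]; try ring)

section ChainLemmas

variable {twoS L : ℕ} [NeZero L]

lemma SyT_comm_Cz (j : Fin L) :
    SyT twoS L * site twoS L j (SzMat twoS) - site twoS L j (SzMat twoS) * SyT twoS L =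
      Complex.I • site twoS L j (SxMat twoS) := by
  rw [SyT, Finset.sum_mul, Finset.mul_sum, ← Finset.sum_sub_distrib]
  rw [Finset.sum_eq_single j]
  · rw [site_mul_same, site_mul_same, ← site_sub, SySzComm, site_smul]
  · intro k _ hkj
    rw [site_comm hkj, sub_self]
  · intro h
    exact absurd (Finset.mem_univ _) h

lemma SyT_comm_Cx (j : Fin L) :
    SyT twoS L * site twoS L j (SxMat twoS) - site twoS L j (SxMat twoS) * SyT twoS L =
      (-Complex.I) • site twoS L j (SzMat twoS) := by
  rw [SyT, Finset.sum_mul, Finset.mul_sum, ← Finset.sum_sub_distrib]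
  rw [Finset.sum_eq_single j]
  · rw [site_mul_same, site_mul_same, ← site_sub, SySxComm, site_smul]
  · intro k _ hkj
    rw [site_comm hkj, sub_self]
  · intro h
    exact absurd (Finset.mem_univ _) h

lemma Uy_anticomm (j : Fin L) :
    Uy twoS L * site twoS L j (SzMat twoS) = -(site twoS L j (SzMat twoS) * Uy twoS L) := by
  set pc : ℂ := ((Real.pi : ℝ) : ℂ) with hpc
  set B : Op twoS L := (-Complex.I * pc) • SyT twoS L with hB
  set Cz := site twoS L j (SzMat twoS) with hCzd
  set Cx := site twoS L j (SxMat twoS) with hCxd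
  have hBz : B * Cz - Cz * B = pc • Cx := by
    rw [hB, smul_mul_assoc, mul_smul_comm, ← smul_sub, hCzd, hCxd, SyT_comm_Cz, smul_smul]
    congr 1
    rw [show -Complex.I * pc * Complex.I = -(Complex.I * Complex.I) * pc by ring,
      Complex.I_mul_I]
    ring
  have hBx : B * Cx - Cx * B = (-pc) • Cz := by
    rw [hB, smul_mul_assoc, mul_smul_comm, ← smul_sub, hCzd, hCxd, SyT_comm_Cx, smul_smul]
    congr 1
    rw [show -Complex.I * pc * -Complex.I = Complex.I * Complex.I * pc by ring,
      Complex.I_mul_I]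
    ring
  have e1 : B * Cz = pc • Cx + Cz * B := sub_eq_iff_eq_add.mp hBz
  have e2 : B * Cx = (-pc) • Cz + Cx * B := sub_eq_iff_eq_add.mp hBx
  have hV : B * (Cz - Complex.I • Cx) =
      (Cz - Complex.I • Cx) * (B + (Complex.I * pc) • 1) := by
    simp only [mul_sub, mul_add, sub_mul, add_mul, mul_smul_comm, smul_mul_assoc, mul_one,
      e1, e2]
    match_scalars <;> (ring_nf; try simp [Complex.I_sq]; try ring)
  have hW : B * (Cz + Complex.I • Cx) =
      (Cz + Complex.I • Cx) * (B + (-(Complex.I * pc)) • 1) := by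
    simp only [mul_sub, mul_add, sub_mul, add_mul, mul_smul_comm, smul_mul_assoc, mul_one,
      e1, e2]
    match_scalars <;> (ring_nf; try simp [Complex.I_sq]; try ring)
  have hexpV : NormedSpace.exp (B + (Complex.I * pc) • 1) = -(NormedSpace.exp B) := by
    rw [Matrix.exp_add_of_commute _ _ ((Commute.one_right B).smul_right _),
      Matrix.exp_smul_one', mul_comm Complex.I pc, hpc, Complex.exp_pi_mul_I, neg_one_smul,
      mul_neg, mul_one]
  have hexpW : NormedSpace.exp (B + (-(Complex.I * pc)) • 1) = -(NormedSpace.exp B) := by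
    rw [Matrix.exp_add_of_commute _ _ ((Commute.one_right B).smul_right _),
      Matrix.exp_smul_one', mul_comm Complex.I pc, hpc, Complex.exp_neg,
      Complex.exp_pi_mul_I, show ((-1:ℂ))⁻¹ = -1 by norm_num, neg_one_smul, mul_neg, mul_one]
  have hiV := Matrix.exp_intertwine hV
  have hiW := Matrix.exp_intertwine hW
  rw [hexpV] at hiV
  rw [hexpW] at hiW
  have hUy : Uy twoS L = NormedSpace.exp B := rfl
  have hkey : NormedSpace.exp B * ((2:ℂ) • Cz) = -((2:ℂ) • Cz * NormedSpace.exp B) := by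
    have hVW : (Cz - Complex.I • Cx) + (Cz + Complex.I • Cx) = (2:ℂ) • Cz := by module
    rw [← hVW, mul_add, hiV, hiW, add_mul]
    simp only [mul_neg, neg_add, sub_mul, add_mul, smul_mul_assoc]
  rw [hUy]
  have h2 : (2:ℂ) ≠ 0 := two_ne_zero
  apply smul_right_injective (Op twoS L) h2
  simp only [smul_neg]
  rw [← mul_smul_comm, ← smul_mul_assoc]
  exact hkey

lemma gauss_sum_c (L : ℕ) : (∑ j ∈ Finset.Icc 1 L, ((j:ℂ) - 1/2)) = (L:ℂ)^2 / 2 := by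
  induction L with
  | zero => simp
  | succ n ih =>
    rw [Finset.sum_Icc_succ_top (by omega), ih]
    push_cast
    ring

lemma Uy_G : Uy twoS L * twistGenL twoS L =
    (-(twistGenL twoS L) - ((((spin twoS : ℝ)) : ℂ) * (L:ℂ)^2) • 1) * Uy twoS L := by
  set S : ℂ := ((spin twoS : ℝ) : ℂ) with hS
  have main : ∀ jj : Fin L,
      Uy twoS L * site twoS L jj (SzMat twoS - S • 1) +
        site twoS L jj (SzMat twoS - S • 1) * Uy twoS L = (-(2*S)) • Uy twoS L := by
    intro jj
    rw [site_sub, site_smul, site_one]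
    rw [mul_sub, sub_mul, mul_smul_comm, smul_mul_assoc, mul_one, one_mul, Uy_anticomm]
    module
  have hsum : Uy twoS L * twistGenL twoS L + twistGenL twoS L * Uy twoS L
      = (-(S * (L:ℂ)^2)) • Uy twoS L := by
    rw [twistGenL, Finset.mul_sum, Finset.sum_mul, ← Finset.sum_add_distrib]
    have hterm : ∀ j ∈ Finset.Icc 1 L,
        (Uy twoS L * (((j:ℂ) - 1/2) • site twoS L ((j:ℕ):Fin L) (SzMat twoS - S • 1)) +
          (((j:ℂ) - 1/2) • site twoS L ((j:ℕ):Fin L) (SzMat twoS - S • 1)) * Uy twoS L) =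
          ((j:ℂ) - 1/2) • ((-(2*S)) • Uy twoS L) := by
      intro j _
      rw [mul_smul_comm, smul_mul_assoc, ← smul_add, main]
    rw [Finset.sum_congr rfl hterm, ← Finset.sum_smul, gauss_sum_c, smul_smul]
    congr 1
    ring
  rw [eq_sub_of_add_eq hsum, sub_mul, neg_mul, smul_mul_assoc, one_mul]
  module

lemma Uy_UtwL_key (c : ℂ) :
    NormedSpace.exp ((-c) • twistGenL twoS L +
        (-(c * ((((spin twoS : ℝ)) : ℂ) * (L:ℂ)^2))) • (1 : Op twoS L)) * Uy twoS L
      = Uy twoS L * NormedSpace.exp (c • twistGenL twoS L) := by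
  apply Matrix.exp_intertwine
  rw [mul_smul_comm, Uy_G, add_mul, smul_mul_assoc, smul_mul_assoc, one_mul, sub_mul, neg_mul,
    smul_mul_assoc, one_mul]
  module

lemma Uy_UtwL (ε : ℝ)
    (hn : ∃ n : ℤ, -((-(ε:ℂ) * ((2 * Real.pi / L : ℝ):ℂ) * Complex.I) *
        ((((spin twoS : ℝ)) : ℂ) * (L:ℂ)^2)) = (n:ℂ) * (2*((Real.pi:ℝ):ℂ)*Complex.I)) :
    Uy twoS L * UtwL twoS L ε = UtwL twoS L (-ε) * Uy twoS L := by
  obtain ⟨n, hn⟩ := hn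
  set γ : ℂ := -(ε:ℂ) * ((2 * Real.pi / L : ℝ):ℂ) * Complex.I with hγ
  set G := twistGenL twoS L with hG
  set κ : ℂ := (((spin twoS : ℝ)) : ℂ) * (L:ℂ)^2 with hκ
  have h1 := Uy_UtwL_key (twoS := twoS) (L := L) γ
  have hsplit : NormedSpace.exp ((-γ) • G + (-(γ*κ)) • (1 : Op twoS L)) =
      NormedSpace.exp ((-γ) • G) * (Complex.exp (-(γ*κ)) • 1) := by
    rw [Matrix.exp_add_of_commute _ _ ((Commute.one_right _).smul_right _),
      Matrix.exp_smul_one']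
  have hone : Complex.exp (-(γ*κ)) = 1 := by
    rw [hγ, hκ] at hn ⊢
    rw [hn, Complex.exp_int_mul_two_pi_mul_I]
  rw [hsplit, hone, one_smul, mul_one] at h1
  have hc : (-((-ε : ℝ) : ℂ)) * ((2 * Real.pi / L : ℝ):ℂ) * Complex.I = -γ := by
    rw [hγ]
    push_cast
    ring
  rw [UtwL, UtwL, hc, ← hG]
  exact h1.symm

end ChainLemmas

/-- Lemma 5: `U^y_π U^twl_{±2π} = U^twl_{∓2π} U^y_π` (no extra sign). -/
theorem spin_reversal_link_twist_commutation (twoS L : ℕ) [NeZero L]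
    (hS : 0 < twoS) (hL4 : 4 ≤ L) (hLeven : Even L) :
    Uy twoS L * UtwL twoS L 1 = UtwL twoS L (-1) * Uy twoS L ∧
    Uy twoS L * UtwL twoS L (-1) = UtwL twoS L 1 * Uy twoS L := by
  obtain ⟨l, hl⟩ := hLeven
  have hl0 : l ≠ 0 := by omega
  have hlC : (l : ℂ) ≠ 0 := Nat.cast_ne_zero.mpr hl0
  have hscal : ∀ e : ℝ, -((-(e:ℂ) * ((2 * Real.pi / L : ℝ):ℂ) * Complex.I) *
      ((((spin twoS : ℝ)) : ℂ) * (L:ℂ)^2)) =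
      ((e:ℂ) * ((twoS : ℂ) * (l : ℂ))) * (2*((Real.pi:ℝ):ℂ)*Complex.I) := by
    intro e
    have hLl : (L:ℂ) = 2 * (l:ℂ) := by rw [hl]; push_cast; ring
    simp only [spin]
    push_cast
    rw [hLl]
    field_simp
  constructor
  · exact Uy_UtwL 1 ⟨(twoS : ℤ) * (l : ℤ), by rw [hscal 1]; push_cast; ring⟩
  · have h := Uy_UtwL (twoS := twoS) (L := L) (-1)
      ⟨-((twoS : ℤ) * (l : ℤ)), by rw [hscal (-1)]; push_cast; ring⟩
    rw [neg_neg] at h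
    exact h


end LSM
end
end
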